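/- Let a monoid V act on an additive commutative monoid H, suppose the path identity holds, and let k ≥ 1 be such that (k+1) • x = k • x for all x : H. Then for all v₁, v₂ : V and every additively idempotent e : H (e + e = e): k • ((v₁ * v₂) • e) = k • (v₁ • (k • (v₂ • e))). (Multiplicativity of the induced map v̄(e) = ω•(v•e) on idempotents.) -/
import Mathlib

/-- Aperiodicity stabilizes: `(k + m) • x = k • x`. -/
lemma aper_add {H : Type*} [AddCommMonoid H] (k : ℕ)
    (aper : ∀ x : H, (k + 1) • x = k • x) (m : ℕ) (x : H) :
    (k + m) • x = k • x := by
  induction m with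
  | zero => rfl
  | succ n ih =>
    have : k + (n + 1) = (k + n) + 1 := by ring
    rw [this, succ_nsmul, ih, ← succ_nsmul, aper]

/-- Iterated path identity: `(n+1) • (v • h) = v • ((n+1) • h) + n • (v • 0)`. -/
lemma path_nsmul {V H : Type*} [Monoid V] [AddCommMonoid H] [MulAction V H]
    (path : ∀ (v : V) (g h : H), v • g + v • h = v • (g + h) + v • (0 : H))
    (v : V) (h : H) : ∀ n : ℕ, (n + 1) • (v • h) = v • ((n + 1) • h) + n • (v • (0 : H)) := by
  intro n
  induction n with
  | zero => simp
  | succ m ih =>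
    have : (m + 1 + 1) • (v • h) = v • h + (m + 1) • (v • h) := by
      rw [succ_nsmul, add_comm]
    rw [this, ih, ← add_assoc, path v h ((m + 1) • h), add_comm h ((m + 1) • h), ← succ_nsmul h (m + 1)]
    rw [add_assoc, add_comm (v • (0:H)) (m • (v • (0:H))), ← succ_nsmul]

/-- Multiplicativity of the induced map `v̄(e) = ω • (v • e)` on additive
idempotents in an aperiodic path algebra. -/
theorem induced_map_multiplicative {V H : Type*} [Monoid V] [AddCommMonoid H]
    [MulAction V H]
    (path : ∀ (v : V) (g h : H), v • g + v • h = v • (g + h) + v • (0 : H))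
    (k : ℕ) (hk : 1 ≤ k) (aper : ∀ x : H, (k + 1) • x = k • x) :
    ∀ (v₁ v₂ : V) (e : H), e + e = e →
      k • ((v₁ * v₂) • e) = k • (v₁ • (k • (v₂ • e))) := by
  intro v₁ v₂ e _
  obtain ⟨m, rfl⟩ : ∃ m, k = m + 1 := ⟨k - 1, (Nat.succ_pred_eq_of_pos hk).symm⟩
  set k := m + 1 with hkdef
  have hkk : k • (k • (v₂ • e)) = k • (v₂ • e) := by
    rw [← mul_nsmul]
    have hle : k ≤ k * k := Nat.le_mul_of_pos_left k (Nat.succ_pos m)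
    calc (k * k) • (v₂ • e) = (k + (k * k - k)) • (v₂ • e) := by
          rw [Nat.add_sub_cancel' hle]
      _ = k • (v₂ • e) := aper_add k aper _ _
  rw [mul_smul, path_nsmul path v₁ (v₂ • e) m, path_nsmul path v₁ (k • (v₂ • e)) m, hkk]
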